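/- Suppose the finite group G acts on the finite set Ω and (G, Ω) satisfies Hypothesis (3fix). Then 3 divides the order of G. -/

import Mathlib

open MulAction Subgroup Pointwise

section Aux

variable {G : Type*} [Group G] {Ω : Type*} [MulAction G Ω]

private lemma conj_mem_of_mem_normalizer {T : Subgroup G} {n : G} (hn : n ∈ Subgroup.normalizer (T : Set G))
    {t : G} (ht : t ∈ T) : n⁻¹ * t * n ∈ T := by
  have h := (Subgroup.mem_normalizer_iff.mp hn (n⁻¹ * t * n)).mpr
  apply h
  have : n * (n⁻¹ * t * n) * n⁻¹ = t := by group
  rwa [this]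

private lemma smul_fix_of_mem_normalizer {T : Subgroup G} {n : G} (hn : n ∈ Subgroup.normalizer (T : Set G))
    {ω : Ω} (hω : ∀ t ∈ T, t • ω = ω) : ∀ t ∈ T, t • (n • ω) = n • ω := by
  intro t ht
  have h1 : n⁻¹ * t * n ∈ T := conj_mem_of_mem_normalizer hn ht
  have : t • n • ω = n • ((n⁻¹ * t * n) • ω) := by
    rw [smul_smul, smul_smul]
    congr 1
    group
  rw [this, hω _ h1]

private lemma exists_mem_normalizer_of_lt {p : ℕ} [Fact p.Prime] [Finite G]
    {T Q : Subgroup G} (hQ : IsPGroup p Q) (hlt : T < Q) :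
    ∃ x : G, x ∈ Q ∧ x ∉ T ∧ x ∈ Subgroup.normalizer (T : Set G) := by
  haveI : Group.IsNilpotent ↥Q := hQ.isNilpotent
  have hnc : NormalizerCondition ↥Q := normalizerCondition_of_isNilpotent
  have hAtop : T.subgroupOf Q < ⊤ := by
    refine lt_top_iff_ne_top.mpr fun htop => ?_
    obtain ⟨q, hqQ, hqT⟩ := SetLike.exists_of_lt hlt
    exact hqT (Subgroup.subgroupOf_eq_top.mp htop hqQ)
  obtain ⟨x, hxn, hxA⟩ := SetLike.exists_of_lt (hnc _ hAtop)
  refine ⟨x.1, x.2, fun hxT => hxA (Subgroup.mem_subgroupOf.mpr hxT), ?_⟩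
  rw [Subgroup.mem_normalizer_iff]
  intro y
  constructor
  · intro hy
    have hyQ : y ∈ Q := hlt.le hy
    have h1 : (⟨y, hyQ⟩ : ↥Q) ∈ T.subgroupOf Q := Subgroup.mem_subgroupOf.mpr hy
    have h2 := (Subgroup.mem_normalizer_iff.mp hxn ⟨y, hyQ⟩).mp h1
    exact Subgroup.mem_subgroupOf.mp h2
  · intro hy
    have hyQ' : x.1 * y * x.1⁻¹ ∈ Q := hlt.le hy
    have hyQ : y ∈ Q := by
      have h3 : x.1⁻¹ * (x.1 * y * x.1⁻¹) * x.1 ∈ Q := mul_mem (mul_mem (inv_mem x.2) hyQ') x.2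
      have h4 : x.1⁻¹ * (x.1 * y * x.1⁻¹) * x.1 = y := by group
      rwa [h4] at h3
    have h5 : x * (⟨y, hyQ⟩ : ↥Q) * x⁻¹ ∈ T.subgroupOf Q := by
      apply Subgroup.mem_subgroupOf.mpr
      exact hy
    have h6 := (Subgroup.mem_normalizer_iff.mp hxn ⟨y, hyQ⟩).mpr h5
    exact Subgroup.mem_subgroupOf.mp h6

private lemma witt {p : ℕ} [Fact p.Prime] [Finite G]
    {T : Subgroup G} (hTp : IsPGroup p T) {w w' : Ω}
    (trans : MulAction.IsPretransitive G Ω)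
    (hw : ∀ t ∈ T, t • w = w) (hw' : ∀ t ∈ T, t • w' = w')
    (hmax : ∀ Q : Subgroup G, IsPGroup p Q → T ≤ Q → (∀ q ∈ Q, q • w = w) → Q = T) :
    ∃ n ∈ Subgroup.normalizer (T : Set G), n • w = w' := by
  obtain ⟨g, hg⟩ := trans.exists_smul_eq w w'
  set H := MulAction.stabilizer G w' with hHdef
  set Tg : Subgroup G := (MulAut.conj g) • T with hTgdef
  have memTg : ∀ x : G, x ∈ Tg ↔ ∃ s ∈ T, g * s * g⁻¹ = x := by
    intro x
    rw [hTgdef, Subgroup.mem_smul_pointwise_iff_exists]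
    simp only [MulAut.smul_def, MulAut.conj_apply]
  have hTgp : IsPGroup p Tg := by
    rw [hTgdef, Subgroup.pointwise_smul_def]
    exact hTp.map _
  have hTH : T ≤ H := fun t ht => MulAction.mem_stabilizer_iff.mpr (hw' t ht)
  have hTgH : Tg ≤ H := by
    intro x hx
    obtain ⟨s, hs, rfl⟩ := (memTg x).mp hx
    refine MulAction.mem_stabilizer_iff.mpr ?_
    rw [mul_smul, mul_smul, ← hg, inv_smul_smul, hw s hs, hg]
  have hmaxTg : ∀ Q : Subgroup G, IsPGroup p Q → Tg ≤ Q → (∀ q ∈ Q, q • w' = w') → Q = Tg := by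
    intro Q hQp hle hQfix
    have h1 : (MulAut.conj g)⁻¹ • Q = T := by
      apply hmax
      · rw [Subgroup.pointwise_smul_def]
        exact hQp.map _
      · intro t ht
        rw [Subgroup.mem_pointwise_smul_iff_inv_smul_mem, inv_inv]
        apply hle
        rw [memTg]
        exact ⟨t, ht, by simp [MulAut.smul_def, MulAut.conj_apply]⟩
      · intro q hq
        rw [Subgroup.mem_pointwise_smul_iff_inv_smul_mem, inv_inv] at hq
        simp only [MulAut.smul_def, MulAut.conj_apply] at hq
        have h2 : (g * q * g⁻¹) • w' = w' := hQfix _ hq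
        have h3 : g • (q • w) = g • w := by
          rw [← hg] at h2
          calc g • (q • w) = (g * q * g⁻¹) • (g • w) := by
                rw [mul_smul, mul_smul, inv_smul_smul]
          _ = g • w := h2
        exact smul_left_cancel g h3
    calc Q = (MulAut.conj g) • ((MulAut.conj g)⁻¹ • Q) := (smul_inv_smul _ _).symm
    _ = Tg := by rw [h1]
  haveI : Finite (Subgroup ↥H) :=
    Finite.of_injective (fun S : Subgroup ↥H => (S : Set ↥H)) SetLike.coe_injective
  haveI : Finite (Sylow p ↥H) :=
    Finite.of_injective (fun P : Sylow p ↥H => (P : Subgroup ↥H)) fun P Q h => Sylow.ext h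
  have hsub_map : (Tg.subgroupOf H).map H.subtype = Tg := by
    rw [Subgroup.subgroupOf_map_subtype, inf_eq_left.mpr hTgH]
  let SylTg : Sylow p ↥H :=
    ⟨Tg.subgroupOf H, hTgp.comap_subtype, by
      intro Q hQ hle
      have hQH : Q.map H.subtype ≤ H := by
        rintro x ⟨y, hy, rfl⟩
        exact y.2
      have h1 : Q.map H.subtype = Tg := by
        apply hmaxTg
        · exact hQ.map _
        · rw [← hsub_map]
          exact Subgroup.map_mono hle
        · intro q hq
          exact MulAction.mem_stabilizer_iff.mp (hQH hq)
      apply Subgroup.map_injective H.subtype_injective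
      rw [h1, hsub_map]⟩
  obtain ⟨R, hR⟩ := (hTp.comap_subtype (K := H)).exists_le_sylow
  obtain ⟨hh, hhR⟩ := MulAction.exists_smul_eq (↥H) SylTg R
  rw [← hhR] at hR
  set n : G := (hh : G) * g with hndef
  have key : T ≤ (MulAut.conj n) • T := by
    intro t ht
    have h1 : (⟨t, hTH ht⟩ : ↥H) ∈ (hh • SylTg : Sylow p ↥H) :=
      hR (Subgroup.mem_subgroupOf.mpr ht)
    have h2 : (⟨t, hTH ht⟩ : ↥H) ∈ MulAut.conj hh • (Tg.subgroupOf H) := h1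
    obtain ⟨s, hs, hseq⟩ := (Subgroup.mem_smul_pointwise_iff_exists _ _ _).mp h2
    have hsval : (s : G) ∈ Tg := Subgroup.mem_subgroupOf.mp hs
    obtain ⟨u, hu, hueq⟩ := (memTg _).mp hsval
    have h3 : (hh : G) * (s : G) * (hh : G)⁻¹ = t := by
      have := congrArg (Subtype.val) hseq
      simpa [MulAut.smul_def, MulAut.conj_apply] using this
    rw [Subgroup.mem_smul_pointwise_iff_exists]
    refine ⟨u, hu, ?_⟩
    simp only [MulAut.smul_def, MulAut.conj_apply, hndef]
    rw [← h3, ← hueq]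
    group
  have hcard : Nat.card ((MulAut.conj n) • T : Subgroup G) = Nat.card T :=
    (Nat.card_congr (Subgroup.equivSMul _ T).toEquiv).symm
  have heq : T = (MulAut.conj n) • T :=
    Subgroup.eq_of_le_of_card_ge key (le_of_eq hcard)
  refine ⟨n, ?_, ?_⟩
  · rw [Subgroup.mem_normalizer_iff]
    intro x
    have h5 : (MulAut.conj n) • x ∈ (MulAut.conj n) • T ↔ x ∈ T :=
      Subgroup.smul_mem_pointwise_smul_iff
    rw [← heq] at h5
    have h6 : (MulAut.conj n) • x = n * x * n⁻¹ := rfl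
    rw [h6] at h5
    exact h5.symm
  · rw [hndef, mul_smul, hg]
    exact MulAction.mem_stabilizer_iff.mp hh.2

end Aux

/-- Hypothesis (3fix): the action of `G` on `Ω` is faithful and transitive, every element
of `G` fixing at least four distinct points of `Ω` is the identity, and some nontrivial
element of `G` fixes at least three distinct points of `Ω`. -/
def Hyp3fix (G : Type*) [Group G] (Ω : Type*) [MulAction G Ω] : Prop :=
  MulAction.IsPretransitive G Ω ∧
  (∀ g : G, (∀ ω : Ω, g • ω = ω) → g = 1) ∧
  (∀ g : G, ∀ a b c d : Ω, a ≠ b → a ≠ c → a ≠ d → b ≠ c → b ≠ d → c ≠ d →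
      g • a = a → g • b = b → g • c = c → g • d = d → g = 1) ∧
  (∃ g : G, g ≠ 1 ∧ ∃ a b c : Ω, a ≠ b ∧ a ≠ c ∧ b ≠ c ∧
      g • a = a ∧ g • b = b ∧ g • c = c)

/-- If the finite group `G` acts on the finite set `Ω` and `(G, Ω)` satisfies
Hypothesis (3fix), then `3` divides the order of `G`. -/
theorem three_dvd_card_of_hyp3fix (G : Type*) [Group G] [Finite G]
    (Ω : Type*) [Finite Ω] [MulAction G Ω] (h : Hyp3fix G Ω) :
    3 ∣ Nat.card G := by
  obtain ⟨trans, _faith, h4, t0, ht0ne, a0, b0, c0, hab0, hac0, hbc0, ha0, hb0, hc0⟩ := h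
  classical
  -- the pointwise stabilizer of the given triple
  set P0 : Subgroup G :=
    MulAction.stabilizer G a0 ⊓ MulAction.stabilizer G b0 ⊓ MulAction.stabilizer G c0 with hP0def
  have ht0P : t0 ∈ P0 := by
    simp only [hP0def, Subgroup.mem_inf, MulAction.mem_stabilizer_iff]
    exact ⟨⟨ha0, hb0⟩, hc0⟩
  have hP0ne : P0 ≠ ⊥ := by
    intro hbot
    rw [hbot, Subgroup.mem_bot] at ht0P
    exact ht0ne ht0P
  have hcard1 : 1 < Nat.card P0 := P0.one_lt_card_iff_ne_bot.mpr hP0ne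
  set p := (Nat.card P0).minFac with hpdef
  have hp : p.Prime := Nat.minFac_prime (by omega)
  haveI : Fact p.Prime := ⟨hp⟩
  haveI : Fintype ↥P0 := Fintype.ofFinite _
  obtain ⟨s, hs⟩ := exists_prime_orderOf_dvd_card (G := ↥P0) p
    (by rw [← Nat.card_eq_fintype_card]; exact (Nat.card P0).minFac_dvd)
  have horder : orderOf (s : G) = p := (Subgroup.orderOf_coe s).trans hs
  set S0 : Subgroup G := Subgroup.zpowers (s : G) with hS0def
  have hS0p : IsPGroup p S0 := IsPGroup.of_card (n := 1) (by rw [Nat.card_zpowers, horder, pow_one])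
  have hS0le : S0 ≤ P0 := Subgroup.zpowers_le.mpr s.2
  have hS0ne : S0 ≠ ⊥ := by
    intro hbot
    have : (s : G) ∈ S0 := Subgroup.mem_zpowers _
    rw [hbot, Subgroup.mem_bot] at this
    rw [this, orderOf_one] at horder
    exact hp.ne_one horder.symm
  -- the family of nontrivial p-subgroups with at least 3 fixed points
  set 𝒮 : Set (Subgroup G) := {U | IsPGroup p U ∧ U ≠ ⊥ ∧ ∃ x y z : Ω, x ≠ y ∧ x ≠ z ∧ y ≠ z ∧
      ∀ u ∈ U, u • x = x ∧ u • y = y ∧ u • z = z} with h𝒮def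
  have hS0mem : S0 ∈ 𝒮 := by
    refine ⟨hS0p, hS0ne, a0, b0, c0, hab0, hac0, hbc0, fun u hu => ?_⟩
    have huP : u ∈ P0 := hS0le hu
    rw [hP0def, Subgroup.mem_inf, Subgroup.mem_inf] at huP
    exact ⟨huP.1.1, huP.1.2, huP.2⟩
  obtain ⟨T, hT𝒮, hTmax'⟩ := Set.Finite.exists_maximalFor id 𝒮 (Set.toFinite _) ⟨S0, hS0mem⟩
  simp only [id] at hTmax'
  obtain ⟨hTp, hTne, a, b, c, hab, hac, hbc, hfix⟩ := hT𝒮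
  have hfa : ∀ t ∈ T, t • a = a := fun t ht => (hfix t ht).1
  have hfb : ∀ t ∈ T, t • b = b := fun t ht => (hfix t ht).2.1
  have hfc : ∀ t ∈ T, t • c = c := fun t ht => (hfix t ht).2.2
  obtain ⟨t1, ht1T, ht1⟩ : ∃ t1 ∈ T, t1 ≠ 1 := by
    obtain ⟨x, hxT, hxB⟩ := SetLike.exists_of_lt hTne.bot_lt
    exact ⟨x, hxT, by simpa [Subgroup.mem_bot] using hxB⟩
  -- the fixed-point set of T is exactly {a, b, c}
  have hchar : ∀ ω : Ω, (∀ u ∈ T, u • ω = ω) → ω = a ∨ ω = b ∨ ω = c := by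
    intro ω hω
    by_contra hcon
    push_neg at hcon
    obtain ⟨h1, h2, h3⟩ := hcon
    exact ht1 (h4 t1 a b c ω hab hac (Ne.symm h1) hbc (Ne.symm h2) (Ne.symm h3)
      (hfa t1 ht1T) (hfb t1 ht1T) (hfc t1 ht1T) (hω t1 ht1T))
  -- "T is a maximal p-subgroup of the stabilizer of w"
  set IsMax : Ω → Prop := fun w =>
    ∀ Q : Subgroup G, IsPGroup p Q → T ≤ Q → (∀ q ∈ Q, q • w = w) → Q = T with hIsMaxdef
  -- dichotomy: if T is not maximal at w, there is a normalizer element fixing w, swapping u v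
  have dich : ∀ w u v : Ω, w ≠ u → w ≠ v → u ≠ v →
      (∀ t ∈ T, t • w = w) → (∀ t ∈ T, t • u = u) → (∀ t ∈ T, t • v = v) →
      (∀ ω : Ω, (∀ g ∈ T, g • ω = ω) → ω = w ∨ ω = u ∨ ω = v) →
      ¬ IsMax w → ∃ x ∈ Subgroup.normalizer (T : Set G), x • w = w ∧ x • u = v ∧ x • v = u := by
    intro w u v hwu hwv huv hw hu hv hchar3 hnmax
    have hnmax' : ¬ ∀ Q : Subgroup G, IsPGroup p Q → T ≤ Q → (∀ q ∈ Q, q • w = w) → Q = T :=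
      hnmax
    push_neg at hnmax'
    obtain ⟨Q, hQp, hTQ, hQfix, hQne⟩ := hnmax'
    have hlt : T < Q := lt_of_le_of_ne hTQ (Ne.symm hQne)
    obtain ⟨x, hxQ, hxT, hxn⟩ := exists_mem_normalizer_of_lt hQp hlt
    have hxw : x • w = w := hQfix x hxQ
    have hxu3 : x • u = w ∨ x • u = u ∨ x • u = v :=
      hchar3 _ (smul_fix_of_mem_normalizer hxn hu)
    have hxv3 : x • v = w ∨ x • v = u ∨ x • v = v :=
      hchar3 _ (smul_fix_of_mem_normalizer hxn hv)
    have hxunw : x • u ≠ w := by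
      intro hh
      rw [← hxw] at hh
      exact hwu (smul_left_cancel x hh).symm
    have hxvnw : x • v ≠ w := by
      intro hh
      rw [← hxw] at hh
      exact hwv (smul_left_cancel x hh).symm
    -- if x fixes u and v then T ⊔ zpowers x contradicts maximality of T
    have hnotboth : ¬ (x • u = u ∧ x • v = v) := by
      rintro ⟨hfu, hfv⟩
      set U : Subgroup G := T ⊔ Subgroup.zpowers x with hUdef
      have hUQ : U ≤ Q := sup_le hTQ (Subgroup.zpowers_le.mpr hxQ)
      have hxU : x ∈ U := Subgroup.mem_sup_right (Subgroup.mem_zpowers x)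
      have hUmem : U ∈ 𝒮 := by
        refine ⟨hQp.to_le hUQ, ?_, w, u, v, hwu, hwv, huv, ?_⟩
        · intro hbot
          have := le_sup_left (a := T) (b := Subgroup.zpowers x)
          rw [← hUdef, hbot, le_bot_iff] at this
          exact hTne this
        · intro g hg
          have hkey : U ≤ MulAction.stabilizer G w ⊓ MulAction.stabilizer G u ⊓
              MulAction.stabilizer G v := by
            rw [hUdef]
            apply sup_le
            · intro t ht
              simp only [Subgroup.mem_inf, MulAction.mem_stabilizer_iff]
              exact ⟨⟨hw t ht, hu t ht⟩, hv t ht⟩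
            · rw [Subgroup.zpowers_le]
              simp only [Subgroup.mem_inf, MulAction.mem_stabilizer_iff]
              exact ⟨⟨hxw, hfu⟩, hfv⟩
          have := hkey hg
          simp only [Subgroup.mem_inf, MulAction.mem_stabilizer_iff] at this
          exact ⟨this.1.1, this.1.2, this.2⟩
      have : T = U := le_antisymm le_sup_left (hTmax' hUmem le_sup_left)
      rw [← this] at hxU
      exact hxT hxU
    rcases hxu3 with hh | hh | hh
    · exact absurd hh hxunw
    · -- x • u = u forces x • v = v
      exfalso
      apply hnotboth
      refine ⟨hh, ?_⟩
      rcases hxv3 with hh2 | hh2 | hh2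
      · exact absurd hh2 hxvnw
      · exfalso
        exact huv (smul_left_cancel x (hh2.trans hh.symm)).symm
      · exact hh2
    · -- x • u = v, so x • v = u
      refine ⟨x, hxn, hxw, hh, ?_⟩
      rcases hxv3 with hh2 | hh2 | hh2
      · exact absurd hh2 hxvnw
      · exact hh2
      · exfalso
        exact huv (smul_left_cancel x (hh.trans hh2.symm))
  -- final counting step
  have final : ∀ w u v : Ω, w ≠ u → w ≠ v → u ≠ v →
      (∀ n : G, n ∈ Subgroup.normalizer (T : Set G) → n • w = w ∨ n • w = u ∨ n • w = v) →
      ∀ n1 n2 : G, n1 ∈ Subgroup.normalizer (T : Set G) → n2 ∈ Subgroup.normalizer (T : Set G) → n1 • w = u → n2 • w = v →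
      3 ∣ Nat.card G := by
    intro w u v hwu hwv huv hmem n1 n2 hn1 hn2 hn1w hn2w
    set N := Subgroup.normalizer (T : Set G) with hNdef
    have horb : MulAction.orbit ↥N w = {w, u, v} := by
      ext ω
      constructor
      · rintro ⟨n, rfl⟩
        have : (n : G) • w = w ∨ (n : G) • w = u ∨ (n : G) • w = v := hmem n.1 n.2
        simpa [Subgroup.smul_def] using this
      · intro hω
        simp only [Set.mem_insert_iff, Set.mem_singleton_iff] at hω
        rcases hω with hh | hh | hh
        · rw [hh]
          exact MulAction.mem_orbit_self w
        · rw [hh]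
          exact ⟨⟨n1, hn1⟩, by simpa [Subgroup.smul_def] using hn1w⟩
        · rw [hh]
          exact ⟨⟨n2, hn2⟩, by simpa [Subgroup.smul_def] using hn2w⟩
    have hcard3 : Nat.card (MulAction.orbit ↥N w) = 3 := by
      rw [horb]
      rw [Nat.card_coe_set_eq]
      rw [Set.ncard_insert_of_notMem (by simp [hwu, hwv]),
        Set.ncard_insert_of_notMem (by simp [huv]), Set.ncard_singleton]
    have hdvd1 : Nat.card (MulAction.orbit ↥N w) ∣ Nat.card ↥N := by
      rw [Nat.card_congr (MulAction.orbitEquivQuotientStabilizer ↥N w)]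
      exact Subgroup.card_quotient_dvd_card _
    rw [hcard3] at hdvd1
    exact hdvd1.trans (Subgroup.card_subgroup_dvd_card N)
  -- normalizer elements always send a fix point to a fix point
  have hmemfix : ∀ w : Ω, (∀ t ∈ T, t • w = w) →
      ∀ n : G, n ∈ Subgroup.normalizer (T : Set G) → n • w = a ∨ n • w = b ∨ n • w = c := by
    intro w hwfix n hn
    exact hchar _ (smul_fix_of_mem_normalizer hn hwfix)
  by_cases hA : IsMax a
  · obtain ⟨na, hna, hnaw⟩ := witt hTp trans hfa hfb hA
    obtain ⟨nb, hnb, hnbw⟩ := witt hTp trans hfa hfc hA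
    exact final a b c hab hac hbc (hmemfix a hfa) na nb hna hnb hnaw hnbw
  · by_cases hB : IsMax b
    · obtain ⟨na, hna, hnaw⟩ := witt hTp trans hfb hfa hB
      obtain ⟨nb, hnb, hnbw⟩ := witt hTp trans hfb hfc hB
      exact final b a c (Ne.symm hab) hbc hac
        (fun n hn => (hmemfix b hfb n hn).elim (fun h => Or.inr (Or.inl h))
          (fun h => h.elim Or.inl (fun h => Or.inr (Or.inr h))))
        na nb hna hnb hnaw hnbw
    · obtain ⟨xa, hxa, hxaa, hxab, hxac⟩ := dich a b c hab hac hbc hfa hfb hfc hchar hA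
      obtain ⟨xb, hxb, hxbb, hxba, hxbc⟩ := dich b a c (Ne.symm hab) hbc hac hfb hfa hfc
        (fun ω hω => (hchar ω hω).elim (fun h => Or.inr (Or.inl h))
          (fun h => h.elim Or.inl (fun h => Or.inr (Or.inr h)))) hB
      -- xa fixes a, swaps b c; xb fixes b, swaps a c
      -- (xa * xb) • a = xa • c = b ; xb • a = c
      refine final a b c hab hac hbc (hmemfix a hfa) (xa * xb) xb
        (mul_mem hxa hxb) hxb ?_ hxba
      rw [mul_smul, hxba, hxac]
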